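/- For m = 2 outcomes, C'_max(nA,nB,2) is contained in the closure of C_max(nA,nB,2); that is, the set of maximally entangled correlations with two outcomes is dense in the set of almost maximally entangled correlations with two outcomes. -/

import Mathlib

open scoped BigOperators

/-- A correlation with `nA` questions for Alice, `nB` questions for Bob and `m` outcomes. -/
def IsCorrelation {nA nB m : ℕ} (p : Fin nA → Fin nB → Fin m → Fin m → ℝ) : Prop :=
  (∀ x y i j, 0 ≤ p x y i j) ∧ ∀ x y, (∑ i, ∑ j, p x y i j) = 1

/-- A projection-valued measure with `m` outcomes on `ℂ^d`. -/
def IsPVM {d m : ℕ} (E : Fin m → Matrix (Fin d) (Fin d) ℂ) : Prop :=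
  (∀ i, (E i).IsHermitian) ∧ (∀ i, E i * E i = E i) ∧ (∑ i, E i = 1)

/-- The set `C_{max,d}(nA,nB,m)` of maximally entangled correlations in dimension `d`. -/
def CmaxD (nA nB m d : ℕ) : Set (Fin nA → Fin nB → Fin m → Fin m → ℝ) :=
  {p | IsCorrelation p ∧
    ∃ (E : Fin nA → Fin m → Matrix (Fin d) (Fin d) ℂ)
      (F : Fin nB → Fin m → Matrix (Fin d) (Fin d) ℂ),
      (∀ x, IsPVM (E x)) ∧ (∀ y, IsPVM (F y)) ∧
      ∀ x y i j, (p x y i j : ℂ) = (1 / (d : ℂ)) * (E x i * F y j).trace}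

/-- The set `C_max(nA,nB,m)` of maximally entangled correlations. -/
def Cmax (nA nB m : ℕ) : Set (Fin nA → Fin nB → Fin m → Fin m → ℝ) :=
  ⋃ (d : ℕ) (_ : 1 ≤ d), CmaxD nA nB m d

/-- A correlation with the same questions for Alice and Bob is synchronous if
`p x x i j = 0` whenever `i ≠ j`. -/
def Synchronous {n m : ℕ} (p : Fin n → Fin n → Fin m → Fin m → ℝ) : Prop :=
  ∀ x i j, i ≠ j → p x x i j = 0

/-- The set `C_max^s(n,m)` of synchronous maximally entangled correlations. -/
def CmaxSync (n m : ℕ) : Set (Fin n → Fin n → Fin m → Fin m → ℝ) :=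
  {p ∈ Cmax n n m | Synchronous p}

open scoped ComplexOrder in
/-- A positive operator-valued measure with `m` outcomes on `ℂ^d`. -/
def IsPOVM {d m : ℕ} (P : Fin m → Matrix (Fin d) (Fin d) ℂ) : Prop :=
  (∀ i, (P i).PosSemidef) ∧ (∑ i, P i = 1)

/-- The set `C'_max(nA,nB,m)` of almost maximally entangled correlations. -/
def CmaxPrime (nA nB m : ℕ) : Set (Fin nA → Fin nB → Fin m → Fin m → ℝ) :=
  {p | IsCorrelation p ∧
    ∃ (d : ℕ) (_ : 1 ≤ d)
      (P : Fin nA → Fin m → Matrix (Fin d) (Fin d) ℂ)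
      (Q : Fin nB → Fin m → Matrix (Fin d) (Fin d) ℂ),
      (∀ x, IsPOVM (P x)) ∧ (∀ y, IsPOVM (Q y)) ∧
      ∀ x y i j, (p x y i j : ℂ) = (1 / (d : ℂ)) * (P x i * Q y j).trace}


open Matrix
open scoped ComplexOrder Kronecker

namespace CP

variable {d : ℕ}

/-- Conjugation of a real diagonal by a matrix `U`. -/
noncomputable def conjU (U : Matrix (Fin d) (Fin d) ℂ) (f : Fin d → ℝ) :
    Matrix (Fin d) (Fin d) ℂ :=
  U * Matrix.diagonal (fun i => (f i : ℂ)) * star U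

variable {U : Matrix (Fin d) (Fin d) ℂ} {f g : Fin d → ℝ}

lemma conjU_mul (hU1 : star U * U = 1) :
    conjU U f * conjU U g = conjU U (fun i => f i * g i) := by
  simp only [conjU]
  rw [mul_assoc, mul_assoc, ← mul_assoc (star U) (U * _), ← mul_assoc (star U) U, hU1,
    one_mul, ← mul_assoc, ← mul_assoc, mul_assoc U, diagonal_mul_diagonal]
  norm_cast

lemma conjU_herm : (conjU U f).IsHermitian := by
  unfold Matrix.IsHermitian conjU
  rw [conjTranspose_mul, conjTranspose_mul, ← star_eq_conjTranspose (star U), star_star,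
    diagonal_conjTranspose, ← star_eq_conjTranspose U, mul_assoc]
  congr 2
  ext i j
  simp only [diagonal_apply, Pi.star_apply]
  split <;> simp [Complex.conj_ofReal]

lemma conjU_one (hU2 : U * star U = 1) : conjU U (fun _ => 1) = 1 := by
  simp [conjU, hU2]

lemma conjU_sub : conjU U f - conjU U g = conjU U (fun i => f i - g i) := by
  simp only [conjU]
  rw [← sub_mul, ← mul_sub, diagonal_sub]
  norm_cast

lemma conjU_add : conjU U f + conjU U g = conjU U (fun i => f i + g i) := by
  simp only [conjU]
  rw [← add_mul, ← mul_add, diagonal_add]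
  norm_cast

lemma conjU_smul (r : ℝ) : (r : ℂ) • conjU U f = conjU U (fun i => r * f i) := by
  simp only [conjU]
  rw [← smul_mul_assoc, ← mul_smul_comm]
  congr 2
  ext i j
  simp only [Matrix.smul_apply, diagonal_apply]
  split <;> push_cast <;> simp

lemma conjU_sum {κ : Type*} (s : Finset κ) (F : κ → Fin d → ℝ) :
    ∑ k ∈ s, conjU U (F k) = conjU U (fun i => ∑ k ∈ s, F k i) := by
  classical
  induction s using Finset.induction with
  | empty => simp [conjU]
  | insert a s h ih =>
      rw [Finset.sum_insert h, ih, conjU_add]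
      simp [Finset.sum_insert h]

lemma conjU_psd (hf : ∀ i, 0 ≤ f i) : (conjU U f).PosSemidef := by
  have hdiag : (Matrix.diagonal (fun i => ((f i : ℝ) : ℂ))).PosSemidef := by
    refine Matrix.PosSemidef.diagonal ?_
    intro i
    simpa using Complex.zero_le_real.2 (hf i)
  simpa [conjU, Matrix.star_eq_conjTranspose] using
    hdiag.mul_mul_conjTranspose_same U

lemma diag_eq_dot (M : Matrix (Fin d) (Fin d) ℂ) (i : Fin d) :
    M i i = dotProduct (star (Pi.single i 1)) (M *ᵥ (Pi.single i 1)) := by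
  simp [dotProduct, Matrix.mulVec, Pi.single_apply, apply_ite,
    Finset.sum_ite_eq', mul_comm]

lemma psd_diag_nonneg {M : Matrix (Fin d) (Fin d) ℂ} (hM : M.PosSemidef) (i : Fin d) :
    0 ≤ M i i := by
  have := hM.dotProduct_mulVec_nonneg (Pi.single i 1)
  rwa [← diag_eq_dot] at this

lemma psd_trace_real {M : Matrix (Fin d) (Fin d) ℂ} (hM : M.PosSemidef) :
    0 ≤ M.trace := by
  unfold Matrix.trace
  exact Finset.sum_nonneg fun i _ => psd_diag_nonneg hM i

lemma trace_conjU_mul (C : Matrix (Fin d) (Fin d) ℂ) :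
    (conjU U f * C).trace = ∑ i, (f i : ℂ) * ((star U * C * U) i i) := by
  have h1 : conjU U f * C = U * ((Matrix.diagonal fun i => (f i : ℂ)) * (star U * C)) := by
    simp only [conjU, mul_assoc]
  rw [h1, Matrix.trace_mul_comm, mul_assoc]
  simp [Matrix.trace, Matrix.diagonal_mul, Matrix.diag]

lemma psd_diag_re_le {M : Matrix (Fin d) (Fin d) ℂ} {t : ℝ}
    (hM' : (((t : ℂ)) • (1 : Matrix (Fin d) (Fin d) ℂ) - M).PosSemidef) (i : Fin d) :
    (M i i).re ≤ t := by
  have h := psd_diag_nonneg hM' i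
  have he : (((t : ℂ)) • (1 : Matrix (Fin d) (Fin d) ℂ) - M) i i = (t : ℂ) - M i i := by
    simp [Matrix.sub_apply, Matrix.smul_apply, Matrix.one_apply]
  rw [he] at h
  have := (Complex.le_def.1 h).1
  simpa using this

lemma key_bound (hU1 : star U * U = 1) {s t : ℝ} (hs : 0 ≤ s) (ht : 0 ≤ t)
    (hf : ∀ i, |f i| ≤ s) (C : Matrix (Fin d) (Fin d) ℂ) (hC : C.PosSemidef)
    (hC' : (((t : ℂ)) • (1 : Matrix (Fin d) (Fin d) ℂ) - C).PosSemidef) :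
    |((conjU U f * C).trace).re| ≤ d * (s * t) := by
  set G := star U * C * U with hG
  have hGpsd : G.PosSemidef := by
    have := hC.conjTranspose_mul_mul_same U
    simpa [hG, Matrix.star_eq_conjTranspose] using this
  have hGle : (((t : ℂ)) • (1 : Matrix (Fin d) (Fin d) ℂ) - G).PosSemidef := by
    have := hC'.conjTranspose_mul_mul_same U
    have he : Uᴴ * (((t : ℂ)) • (1 : Matrix (Fin d) (Fin d) ℂ) - C) * U
        = ((t : ℂ)) • (1 : Matrix (Fin d) (Fin d) ℂ) - G := by
      rw [Matrix.mul_sub, Matrix.sub_mul, ← Matrix.star_eq_conjTranspose]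
      rw [mul_smul_comm, smul_mul_assoc, mul_one, hU1, hG]
    rwa [he] at this
  rw [trace_conjU_mul, Complex.re_sum]
  refine le_trans (Finset.abs_sum_le_sum_abs _ _) ?_
  have hcard : ∀ i : Fin d, |((f i : ℂ) * G i i).re| ≤ s * t := by
    intro i
    have h0 : 0 ≤ (G i i).re := by
      have := psd_diag_nonneg hGpsd i
      simpa using (Complex.le_def.1 this).1
    have h1 : (G i i).re ≤ t := psd_diag_re_le hGle i
    have : ((f i : ℂ) * G i i).re = f i * (G i i).re := by
      simp [Complex.mul_re]
    rw [this, abs_mul]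
    have : |(G i i).re| ≤ t := abs_le.2 ⟨by linarith, h1⟩
    exact mul_le_mul (hf i) this (abs_nonneg _) hs
  calc ∑ i, |((f i : ℂ) * G i i).re| ≤ ∑ _i : Fin d, s * t :=
        Finset.sum_le_sum fun i _ => hcard i
    _ = d * (s * t) := by simp [Finset.sum_const, mul_comm]

open scoped MatrixOrder in
lemma trace_mul_psd_real {E F : Matrix (Fin d) (Fin d) ℂ}
    (hE : E.PosSemidef) (hF : F.PosSemidef) :
    0 ≤ (E * F).trace := by
  have h2 : (CFC.sqrt E * F * CFC.sqrt E).PosSemidef := by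
    have := hF.conjTranspose_mul_mul_same (CFC.sqrt E)
    rwa [(CFC.sqrt_nonneg E).posSemidef.1.eq] at this
  have h4 : (E * F).trace = (CFC.sqrt E * F * CFC.sqrt E).trace := by
    conv_lhs => rw [← CFC.sqrt_mul_sqrt_self E hE.nonneg]
    rw [mul_assoc, Matrix.trace_mul_comm]
  rw [h4]
  exact psd_trace_real h2

lemma real_of_nonneg {z : ℂ} (hz : 0 ≤ z) : ((z.re : ℝ) : ℂ) = z := by
  have h := Complex.le_def.1 hz
  exact Complex.ext (by simp) (by simp [← h.2])

lemma count_bounds {N : ℕ} (hN : 0 < N) {lam : ℝ} (h0 : 0 ≤ lam) (h1 : lam ≤ 1) :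
    lam * N ≤ (∑ k : Fin N, if ((k : ℕ) : ℝ) / N < lam then (1 : ℝ) else 0) ∧
    (∑ k : Fin N, if ((k : ℕ) : ℝ) / N < lam then (1 : ℝ) else 0) ≤ lam * N + 1 := by
  have hN' : (0 : ℝ) < N := by exact_mod_cast hN
  set r := lam * N with hr
  have hr0 : 0 ≤ r := mul_nonneg h0 (le_of_lt hN')
  have hrN : r ≤ N := by nlinarith
  set m := ⌈r⌉₊ with hm
  have hmN : m ≤ N := Nat.ceil_le.2 (by exact_mod_cast hrN)
  have hcond : ∀ k : Fin N,
      ((((k : ℕ) : ℝ) / N < lam) = ((k : ℕ) < m)) := by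
    intro k
    rw [eq_iff_iff, div_lt_iff₀ hN', hm, Nat.lt_ceil]
  have hcard : (Finset.univ.filter (fun k : Fin N => (k : ℕ) < m)).card = m := by
    rw [← Finset.card_range m]
    apply Finset.card_bij (fun (k : Fin N) _ => (k : ℕ))
    · intro a ha
      simpa using (Finset.mem_filter.1 ha).2
    · intro a _ b _ h
      exact Fin.val_injective h
    · intro b hb
      have hbN : b < N := lt_of_lt_of_le (Finset.mem_range.1 hb) hmN
      exact ⟨⟨b, hbN⟩, by simp [Finset.mem_range.1 hb], rfl⟩
  have hsum : (∑ k : Fin N, if ((k : ℕ) : ℝ) / N < lam then (1 : ℝ) else 0) = m := by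
    calc (∑ k : Fin N, if ((k : ℕ) : ℝ) / N < lam then (1 : ℝ) else 0)
        = ∑ k : Fin N, if ((k : ℕ) < m) then (1 : ℝ) else 0 :=
          Finset.sum_congr rfl fun k _ => if_congr (iff_of_eq (hcond k)) rfl rfl
      _ = ((Finset.univ.filter (fun k : Fin N => (k : ℕ) < m)).card : ℝ) := by
          rw [Finset.sum_boole]
      _ = m := by rw [hcard]
  rw [hsum]
  constructor
  · exact_mod_cast Nat.le_ceil r
  · have := Nat.ceil_lt_add_one hr0
    have : (m : ℝ) < r + 1 := by exact_mod_cast this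
    linarith

section Kron
set_option linter.unusedSectionVars false
variable {m n : Type*} [Fintype m] [Fintype n] [DecidableEq m] [DecidableEq n]

lemma kron_conjT (A : Matrix m m ℂ) (B : Matrix n n ℂ) :
    (A ⊗ₖ B)ᴴ = Aᴴ ⊗ₖ Bᴴ := by
  ext ⟨i, j⟩ ⟨k, l⟩
  simp [Matrix.conjTranspose_apply, Matrix.kroneckerMap_apply, star_mul', mul_comm]

lemma kron_sum_right {κ : Type*} (s : Finset κ) (A : Matrix m m ℂ) (B : κ → Matrix n n ℂ) :
    A ⊗ₖ (∑ k ∈ s, B k) = ∑ k ∈ s, A ⊗ₖ B k := by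
  ext ⟨i, j⟩ ⟨k, l⟩
  simp [Matrix.kroneckerMap_apply, Finset.mul_sum, Matrix.sum_apply]

lemma kron_sum_left {κ : Type*} (s : Finset κ) (A : κ → Matrix m m ℂ) (B : Matrix n n ℂ) :
    (∑ k ∈ s, A k) ⊗ₖ B = ∑ k ∈ s, A k ⊗ₖ B := by
  ext ⟨i, j⟩ ⟨k, l⟩
  simp [Matrix.kroneckerMap_apply, Finset.sum_mul, Matrix.sum_apply]

lemma trace_submatrix_equiv' (e : n ≃ m) (M : Matrix m m ℂ) :
    (M.submatrix e e).trace = M.trace := by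
  simp only [Matrix.trace, Matrix.diag, Matrix.submatrix_apply]
  exact Fintype.sum_equiv e _ _ fun i => rfl

end Kron

/-- The diagonal 0-1 marker matrix. -/
noncomputable def delta {N : ℕ} (k : Fin N) : Matrix (Fin N) (Fin N) ℂ :=
  Matrix.diagonal (fun k' => if k' = k then 1 else 0)

lemma delta_mul {N : ℕ} (k k' : Fin N) :
    delta k * delta k' = if k = k' then delta k else 0 := by
  unfold delta
  rw [Matrix.diagonal_mul_diagonal]
  by_cases h : k = k'
  · subst h
    simp only [if_true]
    ext i j
    by_cases hij : i = j
    · subst hij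
      by_cases h1 : i = k <;> simp [Matrix.diagonal_apply_eq, h1]
    · simp [Matrix.diagonal_apply_ne _ hij]
  · simp only [h, if_false]
    ext i j
    by_cases hij : i = j
    · subst hij
      by_cases h1 : i = k <;> by_cases h2 : i = k' <;>
        simp_all [Matrix.diagonal_apply_eq]
    · simp [Matrix.diagonal_apply_ne _ hij]

lemma delta_sum {N : ℕ} : (∑ k : Fin N, delta k) = 1 := by
  ext i j
  by_cases h : i = j
  · subst h
    simp [Matrix.sum_apply, delta, Matrix.diagonal_apply, Matrix.one_apply, Finset.sum_ite_eq]
  · simp [Matrix.sum_apply, delta, Matrix.diagonal_apply, Matrix.one_apply, h]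

lemma delta_trace {N : ℕ} (k : Fin N) : (delta k).trace = 1 := by
  simp [delta, Matrix.trace, Matrix.diag, Matrix.diagonal_apply, Finset.sum_ite_eq']

lemma delta_conjT {N : ℕ} (k : Fin N) : (delta k)ᴴ = delta k := by
  unfold delta
  rw [Matrix.diagonal_conjTranspose]
  ext i j
  by_cases hij : i = j
  · subst hij
    by_cases h : i = k <;> simp [Matrix.diagonal_apply_eq, Pi.star_apply, h]
  · simp [Matrix.diagonal_apply_ne _ hij]

lemma spectral_conjU {A : Matrix (Fin d) (Fin d) ℂ} (hA : A.IsHermitian) :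
    A = conjU (hA.eigenvectorUnitary : Matrix (Fin d) (Fin d) ℂ) hA.eigenvalues := by
  conv_lhs => rw [hA.spectral_theorem]
  rfl

lemma star_conjU (hU1 : star U * U = 1) :
    star U * conjU U f * U = Matrix.diagonal (fun i => (f i : ℂ)) := by
  unfold conjU
  have h : star U * (U * Matrix.diagonal (fun i => (f i : ℂ)) * star U) * U
      = star U * U * Matrix.diagonal (fun i => (f i : ℂ)) * (star U * U) := by
    simp only [mul_assoc]
  rw [h, hU1, one_mul, mul_one]

lemma eig_le_one {A : Matrix (Fin d) (Fin d) ℂ} (hA : A.PosSemidef)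
    (h1 : (1 - A).PosSemidef) (a : Fin d) : hA.1.eigenvalues a ≤ 1 := by
  set U := (hA.1.eigenvectorUnitary : Matrix (Fin d) (Fin d) ℂ) with hUdef
  have hU1 : star U * U = 1 := Matrix.mem_unitaryGroup_iff'.1 hA.1.eigenvectorUnitary.2
  have hdiag : star U * (1 - A) * U
      = Matrix.diagonal (fun i => ((1 - hA.1.eigenvalues i : ℝ) : ℂ)) := by
    have hsub : (1 : Matrix (Fin d) (Fin d) ℂ) - A
        = conjU U (fun i => 1 - hA.1.eigenvalues i) := by
      conv_lhs => rw [show (1 : Matrix (Fin d) (Fin d) ℂ) - A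
        = conjU U (fun _ => 1) - conjU U hA.1.eigenvalues from by
          rw [← spectral_conjU hA.1, conjU_one (Matrix.mem_unitaryGroup_iff.1
            hA.1.eigenvectorUnitary.2)]]
      rw [conjU_sub]
    rw [hsub, star_conjU hU1]
  have hpsd : (star U * (1 - A) * U).PosSemidef := by
    have := h1.conjTranspose_mul_mul_same U
    simpa [Matrix.star_eq_conjTranspose] using this
  rw [hdiag] at hpsd
  have := Matrix.posSemidef_diagonal_iff.1 hpsd a
  have := Complex.zero_le_real.1 (by exact_mod_cast this)
  linarith

lemma re_real_mul (r : ℝ) (z : ℂ) : ((r : ℂ) * z).re = r * z.re := by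
  simp [Complex.mul_re]

/-- indicator-type functions for the spectral averaging -/
noncomputable def gfun (lam : Fin d → ℝ) (N : ℕ) (i : Fin 2) (k : Fin N) : Fin d → ℝ :=
  fun a => if i = 0 then (if ((k : ℕ) : ℝ) / N < lam a then 1 else 0)
    else 1 - (if ((k : ℕ) : ℝ) / N < lam a then 1 else 0)

noncomputable def cntI (lam : Fin d → ℝ) (N : ℕ) (i : Fin 2) : Fin d → ℝ :=
  fun a => ∑ k : Fin N, gfun lam N i k a

noncomputable def lamI (lam : Fin d → ℝ) (i : Fin 2) : Fin d → ℝ :=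
  fun a => if i = 0 then lam a else 1 - lam a

lemma gfun_mul_self (lam : Fin d → ℝ) (N : ℕ) (i : Fin 2) (k : Fin N) (a : Fin d) :
    gfun lam N i k a * gfun lam N i k a = gfun lam N i k a := by
  unfold gfun
  by_cases h : i = 0 <;> by_cases h2 : ((k : ℕ) : ℝ) / N < lam a <;> simp [h, h2]

lemma gfun_add (lam : Fin d → ℝ) (N : ℕ) (k : Fin N) (a : Fin d) :
    gfun lam N 0 k a + gfun lam N 1 k a = 1 := by
  unfold gfun
  norm_num

lemma gfun_nonneg (lam : Fin d → ℝ) (N : ℕ) (i : Fin 2) (k : Fin N) (a : Fin d) :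
    0 ≤ gfun lam N i k a := by
  unfold gfun
  by_cases h : i = 0 <;> by_cases h2 : ((k : ℕ) : ℝ) / N < lam a <;> simp [h, h2]

lemma gfun_le_one (lam : Fin d → ℝ) (N : ℕ) (i : Fin 2) (k : Fin N) (a : Fin d) :
    gfun lam N i k a ≤ 1 := by
  unfold gfun
  by_cases h : i = 0 <;> by_cases h2 : ((k : ℕ) : ℝ) / N < lam a <;> simp [h, h2]

lemma cntI_nonneg (lam : Fin d → ℝ) (N : ℕ) (i : Fin 2) (a : Fin d) :
    0 ≤ cntI lam N i a :=
  Finset.sum_nonneg fun k _ => gfun_nonneg lam N i k a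

lemma cntI_le (lam : Fin d → ℝ) (N : ℕ) (i : Fin 2) (a : Fin d) :
    cntI lam N i a ≤ N := by
  calc cntI lam N i a ≤ ∑ _k : Fin N, (1 : ℝ) :=
        Finset.sum_le_sum fun k _ => gfun_le_one lam N i k a
    _ = N := by simp

lemma cntI_one (lam : Fin d → ℝ) (N : ℕ) (a : Fin d) :
    cntI lam N 1 a = N - cntI lam N 0 a := by
  unfold cntI
  have h : ∀ k : Fin N, gfun lam N 1 k a = 1 - gfun lam N 0 k a := by
    intro k
    have := gfun_add lam N k a
    linarith
  rw [Finset.sum_congr rfl fun k _ => h k, Finset.sum_sub_distrib]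
  simp

lemma cnt_diff_bound {N : ℕ} (hN : 0 < N) (lam : Fin d → ℝ)
    (hlam0 : ∀ a, 0 ≤ lam a) (hlam1 : ∀ a, lam a ≤ 1) (i : Fin 2) (a : Fin d) :
    |cntI lam N i a - N * lamI lam i a| ≤ 1 := by
  have hb := count_bounds hN (hlam0 a) (hlam1 a)
  have h0 : cntI lam N 0 a = ∑ k : Fin N, if ((k : ℕ) : ℝ) / N < lam a then (1 : ℝ) else 0 := by
    unfold cntI gfun
    simp
  by_cases h : i = 0
  · subst h
    unfold lamI
    rw [if_pos rfl, abs_le, h0]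
    constructor
    · linarith [hb.1]
    · linarith [hb.2]
  · have h1 : i = 1 := by omega
    subst h1
    unfold lamI
    rw [cntI_one, if_neg (by decide : ¬(1 : Fin 2) = 0), abs_le, h0]
    constructor
    · linarith [hb.2]
    · linarith [hb.1]

lemma lamI_nonneg (lam : Fin d → ℝ) (hlam0 : ∀ a, 0 ≤ lam a) (hlam1 : ∀ a, lam a ≤ 1)
    (i : Fin 2) (a : Fin d) : 0 ≤ lamI lam i a := by
  unfold lamI
  by_cases h : i = 0 <;> simp [h]
  · exact hlam0 a
  · linarith [hlam1 a]

lemma lamI_le_one (lam : Fin d → ℝ) (hlam0 : ∀ a, 0 ≤ lam a) (hlam1 : ∀ a, lam a ≤ 1)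
    (i : Fin 2) (a : Fin d) : lamI lam i a ≤ 1 := by
  unfold lamI
  by_cases h : i = 0 <;> simp [h]
  · exact hlam1 a
  · linarith [hlam0 a]

section PairEst

lemma pair_est {N : ℕ} (hN : 0 < N)
    {U V : Matrix (Fin d) (Fin d) ℂ}
    (hU1 : star U * U = 1) (hU2 : U * star U = 1)
    (hV1 : star V * V = 1) (hV2 : V * star V = 1)
    (lam mu : Fin d → ℝ) (hlam0 : ∀ a, 0 ≤ lam a) (hlam1 : ∀ a, lam a ≤ 1)
    (hmu0 : ∀ a, 0 ≤ mu a) (hmu1 : ∀ a, mu a ≤ 1) (i j : Fin 2) :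
    |((conjU U (cntI lam N i) * conjU V (cntI mu N j)).trace).re
      - (N : ℝ) ^ 2 * ((conjU U (lamI lam i) * conjU V (lamI mu j)).trace).re|
      ≤ 2 * d * N := by
  set SA := conjU U (cntI lam N i) with hSA
  set SB := conjU V (cntI mu N j) with hSB
  set PA := conjU U (lamI lam i) with hPA
  set QB := conjU V (lamI mu j) with hQB
  set z1 := (SA * SB).trace with hz1
  set z2 := (PA * QB).trace with hz2
  have hsplit : z1 - ((N : ℂ)) ^ 2 * z2
      = ((SA - (N : ℂ) • PA) * SB).trace + (N : ℂ) * ((SB - (N : ℂ) • QB) * PA).trace := by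
    rw [sub_mul, sub_mul, Matrix.trace_sub, Matrix.trace_sub, smul_mul_assoc, smul_mul_assoc,
      Matrix.trace_smul, Matrix.trace_smul, Matrix.trace_mul_comm SB PA,
      Matrix.trace_mul_comm QB PA]
    simp only [smul_eq_mul]
    ring
  -- rewrite differences as conjU of bounded functions
  have hcast : ((N : ℕ) : ℂ) = (((N : ℝ)) : ℂ) := by norm_cast
  have hdiffA : SA - (N : ℂ) • PA
      = conjU U (fun a => cntI lam N i a - N * lamI lam i a) := by
    rw [hSA, hPA, hcast, conjU_smul, conjU_sub]
  have hdiffB : SB - (N : ℂ) • QB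
      = conjU V (fun a => cntI mu N j a - N * lamI mu j a) := by
    rw [hSB, hQB, hcast, conjU_smul, conjU_sub]
  -- first term bound
  have hSBpsd : SB.PosSemidef := conjU_psd (fun a => cntI_nonneg mu N j a)
  have hSBle : ((((N : ℝ)) : ℂ) • (1 : Matrix (Fin d) (Fin d) ℂ) - SB).PosSemidef := by
    have h1 : (((N : ℝ)) : ℂ) • (1 : Matrix (Fin d) (Fin d) ℂ)
        = conjU V (fun _ => (N : ℝ) * 1) := by
      rw [← conjU_smul, conjU_one hV2]
    rw [h1, hSB, conjU_sub]
    exact conjU_psd (fun a => by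
      have := cntI_le mu N j a
      linarith)
  have hterm1 : |(((SA - (N : ℂ) • PA) * SB).trace).re| ≤ d * (1 * N) := by
    rw [hdiffA]
    exact key_bound hU1 zero_le_one (Nat.cast_nonneg N)
      (fun a => cnt_diff_bound hN lam hlam0 hlam1 i a) SB hSBpsd hSBle
  -- second term bound
  have hPApsd : PA.PosSemidef := conjU_psd (fun a => lamI_nonneg lam hlam0 hlam1 i a)
  have hPAle : ((((1 : ℝ)) : ℂ) • (1 : Matrix (Fin d) (Fin d) ℂ) - PA).PosSemidef := by
    have h1 : (((1 : ℝ)) : ℂ) • (1 : Matrix (Fin d) (Fin d) ℂ)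
        = conjU U (fun _ => (1 : ℝ) * 1) := by
      rw [← conjU_smul, conjU_one hU2]
    rw [h1, hPA, conjU_sub]
    exact conjU_psd (fun a => by
      have := lamI_le_one lam hlam0 hlam1 i a
      linarith)
  have hterm2 : |(((SB - (N : ℂ) • QB) * PA).trace).re| ≤ d * (1 * 1) := by
    rw [hdiffB]
    exact key_bound hV1 zero_le_one zero_le_one
      (fun a => cnt_diff_bound hN mu hmu0 hmu1 j a) PA hPApsd hPAle
  -- combine
  have hre : (z1 - ((N : ℂ)) ^ 2 * z2).re
      = z1.re - (N : ℝ) ^ 2 * z2.re := by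
    rw [Complex.sub_re]
    congr 1
    have : ((N : ℂ)) ^ 2 = (((((N : ℝ)) ^ 2 : ℝ)) : ℂ) := by push_cast; ring
    rw [this, re_real_mul]
  rw [← hre, hsplit]
  have habs : |(((SA - (N : ℂ) • PA) * SB).trace
      + (N : ℂ) * ((SB - (N : ℂ) • QB) * PA).trace).re|
      ≤ |(((SA - (N : ℂ) • PA) * SB).trace).re|
        + (N : ℝ) * |(((SB - (N : ℂ) • QB) * PA).trace).re| := by
    rw [Complex.add_re]
    refine le_trans (abs_add_le _ _) ?_
    gcongr
    rw [hcast, re_real_mul, abs_mul, abs_of_nonneg (Nat.cast_nonneg (α := ℝ) N)]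
  refine le_trans habs ?_
  have hNR : (0 : ℝ) ≤ N := Nat.cast_nonneg N
  calc |(((SA - (N : ℂ) • PA) * SB).trace).re|
        + (N : ℝ) * |(((SB - (N : ℂ) • QB) * PA).trace).re|
      ≤ d * (1 * N) + (N : ℝ) * (d * (1 * 1)) := by
        gcongr
    _ = 2 * d * N := by ring

end PairEst

section Blocks

variable {N : ℕ}

/-- Alice block PVM element. -/
noncomputable def blockA (U : Matrix (Fin d) (Fin d) ℂ) (lam : Fin d → ℝ) (N : ℕ) (i : Fin 2) :
    Matrix (Fin d × (Fin N × Fin N)) (Fin d × (Fin N × Fin N)) ℂ :=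
  ∑ k : Fin N, (conjU U (gfun lam N i k)) ⊗ₖ ((delta k) ⊗ₖ (1 : Matrix (Fin N) (Fin N) ℂ))

/-- Bob block PVM element. -/
noncomputable def blockB (V : Matrix (Fin d) (Fin d) ℂ) (mu : Fin d → ℝ) (N : ℕ) (j : Fin 2) :
    Matrix (Fin d × (Fin N × Fin N)) (Fin d × (Fin N × Fin N)) ℂ :=
  ∑ l : Fin N, (conjU V (gfun mu N j l)) ⊗ₖ ((1 : Matrix (Fin N) (Fin N) ℂ) ⊗ₖ (delta l))

variable {U V : Matrix (Fin d) (Fin d) ℂ} {lam mu : Fin d → ℝ}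

lemma blockA_herm (i : Fin 2) : (blockA U lam N i).IsHermitian := by
  unfold Matrix.IsHermitian blockA
  rw [Matrix.conjTranspose_sum]
  refine Finset.sum_congr rfl fun k _ => ?_
  rw [kron_conjT, kron_conjT, delta_conjT, Matrix.conjTranspose_one, conjU_herm.eq]

lemma blockB_herm (j : Fin 2) : (blockB V mu N j).IsHermitian := by
  unfold Matrix.IsHermitian blockB
  rw [Matrix.conjTranspose_sum]
  refine Finset.sum_congr rfl fun l _ => ?_
  rw [kron_conjT, kron_conjT, delta_conjT, Matrix.conjTranspose_one, conjU_herm.eq]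

lemma blockA_mul_self (hU1 : star U * U = 1) (i : Fin 2) :
    blockA U lam N i * blockA U lam N i = blockA U lam N i := by
  unfold blockA
  rw [Finset.sum_mul_sum]
  refine Finset.sum_congr rfl fun k _ => ?_
  rw [Finset.sum_eq_single k]
  · rw [← Matrix.mul_kronecker_mul, ← Matrix.mul_kronecker_mul, delta_mul, if_pos rfl, one_mul,
      conjU_mul hU1, show (fun a => gfun lam N i k a * gfun lam N i k a) = gfun lam N i k
      from funext fun a => gfun_mul_self lam N i k a]
  · intro k' _ hk'
    rw [← Matrix.mul_kronecker_mul, ← Matrix.mul_kronecker_mul, delta_mul,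
      if_neg (Ne.symm hk'), Matrix.zero_kronecker, Matrix.kronecker_zero]
  · intro h
    exact absurd (Finset.mem_univ k) h

lemma blockB_mul_self (hV1 : star V * V = 1) (j : Fin 2) :
    blockB V mu N j * blockB V mu N j = blockB V mu N j := by
  unfold blockB
  rw [Finset.sum_mul_sum]
  refine Finset.sum_congr rfl fun l _ => ?_
  rw [Finset.sum_eq_single l]
  · rw [← Matrix.mul_kronecker_mul, ← Matrix.mul_kronecker_mul, delta_mul, if_pos rfl, one_mul,
      conjU_mul hV1, show (fun a => gfun mu N j l a * gfun mu N j l a) = gfun mu N j l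
      from funext fun a => gfun_mul_self mu N j l a]
  · intro l' _ hl'
    rw [← Matrix.mul_kronecker_mul, ← Matrix.mul_kronecker_mul, delta_mul,
      if_neg (Ne.symm hl'), Matrix.kronecker_zero, Matrix.kronecker_zero]
  · intro h
    exact absurd (Finset.mem_univ l) h

lemma blockA_add (hU2 : U * star U = 1) :
    blockA U lam N 0 + blockA U lam N 1 = 1 := by
  unfold blockA
  rw [← Finset.sum_add_distrib]
  have h : ∀ k : Fin N,
      (conjU U (gfun lam N 0 k)) ⊗ₖ ((delta k) ⊗ₖ (1 : Matrix (Fin N) (Fin N) ℂ))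
      + (conjU U (gfun lam N 1 k)) ⊗ₖ ((delta k) ⊗ₖ (1 : Matrix (Fin N) (Fin N) ℂ))
      = (1 : Matrix (Fin d) (Fin d) ℂ) ⊗ₖ ((delta k) ⊗ₖ (1 : Matrix (Fin N) (Fin N) ℂ)) := by
    intro k
    rw [← Matrix.add_kronecker, conjU_add,
      show (fun a => gfun lam N 0 k a + gfun lam N 1 k a) = fun _ => (1 : ℝ) from
        funext fun a => gfun_add lam N k a, conjU_one hU2]
  rw [Finset.sum_congr rfl fun k _ => h k, ← kron_sum_right, ← kron_sum_left, delta_sum,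
    Matrix.one_kronecker_one, Matrix.one_kronecker_one]

lemma blockB_add (hV2 : V * star V = 1) :
    blockB V mu N 0 + blockB V mu N 1 = 1 := by
  unfold blockB
  rw [← Finset.sum_add_distrib]
  have h : ∀ l : Fin N,
      (conjU V (gfun mu N 0 l)) ⊗ₖ ((1 : Matrix (Fin N) (Fin N) ℂ) ⊗ₖ (delta l))
      + (conjU V (gfun mu N 1 l)) ⊗ₖ ((1 : Matrix (Fin N) (Fin N) ℂ) ⊗ₖ (delta l))
      = (1 : Matrix (Fin d) (Fin d) ℂ) ⊗ₖ ((1 : Matrix (Fin N) (Fin N) ℂ) ⊗ₖ (delta l)) := by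
    intro l
    rw [← Matrix.add_kronecker, conjU_add,
      show (fun a => gfun mu N 0 l a + gfun mu N 1 l a) = fun _ => (1 : ℝ) from
        funext fun a => gfun_add mu N l a, conjU_one hV2]
  rw [Finset.sum_congr rfl fun l _ => h l, ← kron_sum_right, ← kron_sum_right, delta_sum,
    Matrix.one_kronecker_one, Matrix.one_kronecker_one]

lemma blockA_mul_blockB_trace (i j : Fin 2) :
    (blockA U lam N i * blockB V mu N j).trace
      = (conjU U (cntI lam N i) * conjU V (cntI mu N j)).trace := by
  unfold blockA blockB
  rw [Finset.sum_mul_sum, Matrix.trace_sum]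
  have hL : ∀ k : Fin N, (∑ l : Fin N,
      ((conjU U (gfun lam N i k)) ⊗ₖ ((delta k) ⊗ₖ (1 : Matrix (Fin N) (Fin N) ℂ)))
      * ((conjU V (gfun mu N j l)) ⊗ₖ ((1 : Matrix (Fin N) (Fin N) ℂ) ⊗ₖ (delta l)))).trace
      = ∑ l : Fin N, (conjU U (gfun lam N i k) * conjU V (gfun mu N j l)).trace := by
    intro k
    rw [Matrix.trace_sum]
    refine Finset.sum_congr rfl fun l _ => ?_
    rw [← Matrix.mul_kronecker_mul, ← Matrix.mul_kronecker_mul, one_mul, mul_one,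
      Matrix.trace_kronecker, Matrix.trace_kronecker, delta_trace, delta_trace]
    ring
  rw [Finset.sum_congr rfl fun k _ => hL k]
  have hR : conjU U (cntI lam N i) = ∑ k : Fin N, conjU U (gfun lam N i k) :=
    (conjU_sum Finset.univ (gfun lam N i)).symm
  have hR2 : conjU V (cntI mu N j) = ∑ l : Fin N, conjU V (gfun mu N j l) :=
    (conjU_sum Finset.univ (gfun mu N j)).symm
  rw [hR, hR2, Finset.sum_mul_sum, Matrix.trace_sum]
  refine Finset.sum_congr rfl fun k _ => ?_
  rw [Matrix.trace_sum]

end Blocks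

end CP

open Matrix in
open scoped ComplexOrder Kronecker in
lemma CP.approx_step {nA nB d : ℕ} (hd : 1 ≤ d)
    (P : Fin nA → Fin 2 → Matrix (Fin d) (Fin d) ℂ)
    (Q : Fin nB → Fin 2 → Matrix (Fin d) (Fin d) ℂ)
    (hP : ∀ x, IsPOVM (P x)) (hQ : ∀ y, IsPOVM (Q y))
    (N : ℕ) (hN : 0 < N) :
    ∃ q ∈ Cmax nA nB 2, ∀ x y i j,
      |q x y i j - ((1 / (d : ℂ)) * (P x i * Q y j).trace).re| ≤ 2 / N := by
  classical
  have hA : ∀ x, (P x 0).PosSemidef := fun x => (hP x).1 0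
  have hB : ∀ y, (Q y 0).PosSemidef := fun y => (hQ y).1 0
  have hPsum : ∀ x, P x 0 + P x 1 = 1 := by
    intro x
    have h := (hP x).2
    rwa [Fin.sum_univ_two] at h
  have hQsum : ∀ y, Q y 0 + Q y 1 = 1 := by
    intro y
    have h := (hQ y).2
    rwa [Fin.sum_univ_two] at h
  set UA : Fin nA → Matrix (Fin d) (Fin d) ℂ :=
    fun x => ((hA x).1.eigenvectorUnitary : Matrix (Fin d) (Fin d) ℂ) with hUAdef
  set lamA : Fin nA → Fin d → ℝ := fun x => (hA x).1.eigenvalues with hlamAdef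
  set UB : Fin nB → Matrix (Fin d) (Fin d) ℂ :=
    fun y => ((hB y).1.eigenvectorUnitary : Matrix (Fin d) (Fin d) ℂ) with hUBdef
  set lamB : Fin nB → Fin d → ℝ := fun y => (hB y).1.eigenvalues with hlamBdef
  have hU1A : ∀ x, star (UA x) * UA x = 1 :=
    fun x => Matrix.mem_unitaryGroup_iff'.1 (hA x).1.eigenvectorUnitary.2
  have hU2A : ∀ x, UA x * star (UA x) = 1 :=
    fun x => Matrix.mem_unitaryGroup_iff.1 (hA x).1.eigenvectorUnitary.2
  have hU1B : ∀ y, star (UB y) * UB y = 1 :=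
    fun y => Matrix.mem_unitaryGroup_iff'.1 (hB y).1.eigenvectorUnitary.2
  have hU2B : ∀ y, UB y * star (UB y) = 1 :=
    fun y => Matrix.mem_unitaryGroup_iff.1 (hB y).1.eigenvectorUnitary.2
  have hlamA0 : ∀ x a, 0 ≤ lamA x a := fun x a => (hA x).eigenvalues_nonneg a
  have hlamB0 : ∀ y a, 0 ≤ lamB y a := fun y a => (hB y).eigenvalues_nonneg a
  have hlamA1 : ∀ x a, lamA x a ≤ 1 := by
    intro x a
    have h1 : ((1 : Matrix (Fin d) (Fin d) ℂ) - P x 0).PosSemidef := by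
      have h2 : (1 : Matrix (Fin d) (Fin d) ℂ) - P x 0 = P x 1 := by
        rw [← hPsum x]
        abel
      rw [h2]
      exact (hP x).1 1
    exact CP.eig_le_one (hA x) h1 a
  have hlamB1 : ∀ y a, lamB y a ≤ 1 := by
    intro y a
    have h1 : ((1 : Matrix (Fin d) (Fin d) ℂ) - Q y 0).PosSemidef := by
      have h2 : (1 : Matrix (Fin d) (Fin d) ℂ) - Q y 0 = Q y 1 := by
        rw [← hQsum y]
        abel
      rw [h2]
      exact (hQ y).1 1
    exact CP.eig_le_one (hB y) h1 a
  have hPconj : ∀ x (i : Fin 2), P x i = CP.conjU (UA x) (CP.lamI (lamA x) i) := by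
    intro x i
    by_cases hi : i = 0
    · subst hi
      rw [show CP.lamI (lamA x) 0 = lamA x from funext fun a => if_pos rfl]
      exact CP.spectral_conjU (hA x).1
    · have hi1 : i = 1 := by omega
      subst hi1
      have h1 : P x 1 = 1 - P x 0 := by
        rw [← hPsum x]
        abel
      rw [h1, show CP.lamI (lamA x) 1 = fun a => (fun _ => (1:ℝ)) a - lamA x a from
        funext fun a => if_neg (by decide), ← CP.conjU_sub, CP.conjU_one (hU2A x),
        ← CP.spectral_conjU (hA x).1]
  have hQconj : ∀ y (j : Fin 2), Q y j = CP.conjU (UB y) (CP.lamI (lamB y) j) := by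
    intro y j
    by_cases hj : j = 0
    · subst hj
      rw [show CP.lamI (lamB y) 0 = lamB y from funext fun a => if_pos rfl]
      exact CP.spectral_conjU (hB y).1
    · have hj1 : j = 1 := by omega
      subst hj1
      have h1 : Q y 1 = 1 - Q y 0 := by
        rw [← hQsum y]
        abel
      rw [h1, show CP.lamI (lamB y) 1 = fun a => (fun _ => (1:ℝ)) a - lamB y a from
        funext fun a => if_neg (by decide), ← CP.conjU_sub, CP.conjU_one (hU2B y),
        ← CP.spectral_conjU (hB y).1]
  -- the big dimension and reindexing equivalence
  set D := d * (N * N) with hDdef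
  have hD1 : 1 ≤ D := Nat.mul_pos (by omega) (Nat.mul_pos hN hN)
  have hD0 : (D : ℂ) ≠ 0 := by
    exact_mod_cast Nat.pos_iff_ne_zero.1 hD1
  set e : (Fin d × (Fin N × Fin N)) ≃ Fin D :=
    ((Equiv.refl (Fin d)).prodCongr finProdFinEquiv).trans finProdFinEquiv with hedef
  set EE : Fin nA → Fin 2 → Matrix (Fin D) (Fin D) ℂ :=
    fun x i => (CP.blockA (UA x) (lamA x) N i).submatrix e.symm e.symm with hEEdef
  set FF : Fin nB → Fin 2 → Matrix (Fin D) (Fin D) ℂ :=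
    fun y j => (CP.blockB (UB y) (lamB y) N j).submatrix e.symm e.symm with hFFdef
  have hEherm : ∀ x i, (EE x i).IsHermitian :=
    fun x i => (CP.blockA_herm i).submatrix e.symm
  have hFherm : ∀ y j, (FF y j).IsHermitian :=
    fun y j => (CP.blockB_herm j).submatrix e.symm
  have hEidem : ∀ x i, EE x i * EE x i = EE x i := by
    intro x i
    show (CP.blockA (UA x) (lamA x) N i).submatrix e.symm e.symm
      * (CP.blockA (UA x) (lamA x) N i).submatrix e.symm e.symm = _
    rw [Matrix.submatrix_mul_equiv, CP.blockA_mul_self (hU1A x)]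
  have hFidem : ∀ y j, FF y j * FF y j = FF y j := by
    intro y j
    show (CP.blockB (UB y) (lamB y) N j).submatrix e.symm e.symm
      * (CP.blockB (UB y) (lamB y) N j).submatrix e.symm e.symm = _
    rw [Matrix.submatrix_mul_equiv, CP.blockB_mul_self (hU1B y)]
  have hEsum : ∀ x, (∑ i, EE x i) = 1 := by
    intro x
    rw [Fin.sum_univ_two]
    calc EE x 0 + EE x 1
        = (CP.blockA (UA x) (lamA x) N 0 + CP.blockA (UA x) (lamA x) N 1).submatrix
            e.symm e.symm := by
          ext ii jj
          simp [hEEdef, Matrix.submatrix_apply]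
      _ = (1 : Matrix (Fin d × (Fin N × Fin N)) (Fin d × (Fin N × Fin N)) ℂ).submatrix
            e.symm e.symm := by rw [CP.blockA_add (hU2A x)]
      _ = 1 := Matrix.submatrix_one_equiv e.symm
  have hFsum : ∀ y, (∑ j, FF y j) = 1 := by
    intro y
    rw [Fin.sum_univ_two]
    calc FF y 0 + FF y 1
        = (CP.blockB (UB y) (lamB y) N 0 + CP.blockB (UB y) (lamB y) N 1).submatrix
            e.symm e.symm := by
          ext ii jj
          simp [hFFdef, Matrix.submatrix_apply]
      _ = (1 : Matrix (Fin d × (Fin N × Fin N)) (Fin d × (Fin N × Fin N)) ℂ).submatrix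
            e.symm e.symm := by rw [CP.blockB_add (hU2B y)]
      _ = 1 := Matrix.submatrix_one_equiv e.symm
  have hEpsd : ∀ x i, (EE x i).PosSemidef := by
    intro x i
    have h := Matrix.posSemidef_conjTranspose_mul_self (EE x i)
    rwa [(hEherm x i).eq, hEidem x i] at h
  have hFpsd : ∀ y j, (FF y j).PosSemidef := by
    intro y j
    have h := Matrix.posSemidef_conjTranspose_mul_self (FF y j)
    rwa [(hFherm y j).eq, hFidem y j] at h
  have htrace : ∀ x y i j, (EE x i * FF y j).trace
      = (CP.conjU (UA x) (CP.cntI (lamA x) N i)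
          * CP.conjU (UB y) (CP.cntI (lamB y) N j)).trace := by
    intro x y i j
    show ((CP.blockA (UA x) (lamA x) N i).submatrix e.symm e.symm
      * (CP.blockB (UB y) (lamB y) N j).submatrix e.symm e.symm).trace = _
    rw [Matrix.submatrix_mul_equiv, CP.trace_submatrix_equiv',
      CP.blockA_mul_blockB_trace]
  set q : Fin nA → Fin nB → Fin 2 → Fin 2 → ℝ :=
    fun x y i j => ((1 / (D : ℂ)) * (EE x i * FF y j).trace).re with hqdef
  have h1D : (0 : ℂ) ≤ 1 / (D : ℂ) := by
    rw [show (1 / (D : ℂ)) = (((1 / (D : ℝ) : ℝ)) : ℂ) by push_cast; ring]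
    refine Complex.zero_le_real.2 (by positivity)
  have hz : ∀ x y i j, 0 ≤ (1 / (D : ℂ)) * (EE x i * FF y j).trace := by
    intro x y i j
    exact mul_nonneg h1D (CP.trace_mul_psd_real (hEpsd x i) (hFpsd y j))
  have hqC : ∀ x y i j, ((q x y i j : ℝ) : ℂ) = (1 / (D : ℂ)) * (EE x i * FF y j).trace :=
    fun x y i j => CP.real_of_nonneg (hz x y i j)
  have hqsum : ∀ x y, (∑ i, ∑ j, q x y i j) = 1 := by
    intro x y
    have hTr : ∑ i : Fin 2, ∑ j : Fin 2, (EE x i * FF y j).trace = (D : ℂ) := by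
      calc ∑ i : Fin 2, ∑ j : Fin 2, (EE x i * FF y j).trace
          = ∑ i : Fin 2, ((EE x i) * (∑ j, FF y j)).trace := by
            refine Finset.sum_congr rfl fun i _ => ?_
            rw [Finset.mul_sum, Matrix.trace_sum]
        _ = ∑ i : Fin 2, (EE x i).trace := by
            refine Finset.sum_congr rfl fun i _ => ?_
            rw [hFsum y, mul_one]
        _ = (∑ i, EE x i).trace := (Matrix.trace_sum _ _).symm
        _ = (1 : Matrix (Fin D) (Fin D) ℂ).trace := by rw [hEsum x]
        _ = (D : ℂ) := by simp [Matrix.trace_one]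
    have hre : (∑ i : Fin 2, ∑ j : Fin 2, q x y i j)
        = ((1 / (D : ℂ)) * ∑ i : Fin 2, ∑ j : Fin 2, (EE x i * FF y j).trace).re := by
      rw [Finset.mul_sum, Complex.re_sum]
      refine Finset.sum_congr rfl fun i _ => ?_
      rw [Finset.mul_sum, Complex.re_sum]
    rw [hre, hTr, one_div, inv_mul_cancel₀ hD0]
    simp
  have hqnonneg : ∀ x y i j, 0 ≤ q x y i j := by
    intro x y i j
    have h := (Complex.le_def.1 (hz x y i j)).1
    show 0 ≤ ((1 / (D : ℂ)) * (EE x i * FF y j).trace).re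
    simpa using h
  refine ⟨q, ?_, ?_⟩
  · refine Set.mem_iUnion.2 ⟨D, Set.mem_iUnion.2 ⟨hD1, ?_⟩⟩
    refine ⟨⟨hqnonneg, hqsum⟩, EE, FF, ?_, ?_, ?_⟩
    · exact fun x => ⟨fun i => hEherm x i, fun i => hEidem x i, hEsum x⟩
    · exact fun y => ⟨fun j => hFherm y j, fun j => hFidem y j, hFsum y⟩
    · exact hqC
  · intro x y i j
    have hdpos : (0 : ℝ) < d := by exact_mod_cast Nat.lt_of_lt_of_le Nat.zero_lt_one hd
    have hNpos : (0 : ℝ) < N := by exact_mod_cast hN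
    have hDR : ((D : ℝ)) = (d : ℝ) * ((N : ℝ) * (N : ℝ)) := by
      rw [hDdef]; push_cast; ring
    have hest := CP.pair_est hN (hU1A x) (hU2A x) (hU1B y) (hU2B y)
      (lamA x) (lamB y) (hlamA0 x) (hlamA1 x) (hlamB0 y) (hlamB1 y) i j
    set a : ℝ := ((CP.conjU (UA x) (CP.cntI (lamA x) N i)
      * CP.conjU (UB y) (CP.cntI (lamB y) N j)).trace).re with hadef
    set b : ℝ := ((CP.conjU (UA x) (CP.lamI (lamA x) i)
      * CP.conjU (UB y) (CP.lamI (lamB y) j)).trace).re with hbdef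
    have hq1 : q x y i j = (1 / (D : ℝ)) * a := by
      show ((1 / (D : ℂ)) * (EE x i * FF y j).trace).re = _
      rw [htrace x y i j, show (1 / (D : ℂ)) = (((1 / (D : ℝ) : ℝ)) : ℂ) by push_cast; ring,
        CP.re_real_mul]
    have hp1 : ((1 / (d : ℂ)) * (P x i * Q y j).trace).re = (1 / (d : ℝ)) * b := by
      rw [hPconj x i, hQconj y j, show (1 / (d : ℂ)) = (((1 / (d : ℝ) : ℝ)) : ℂ) by
        push_cast; ring, CP.re_real_mul]
    rw [hq1, hp1]
    have hkey : (1 / (D : ℝ)) * a - (1 / (d : ℝ)) * b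
        = (1 / (D : ℝ)) * (a - (N : ℝ) ^ 2 * b) := by
      rw [hDR]
      field_simp
    rw [hkey, abs_mul, abs_of_pos (show (0:ℝ) < 1 / (D:ℝ) by rw [hDR]; positivity)]
    calc (1 / (D : ℝ)) * |a - (N : ℝ) ^ 2 * b| ≤ (1 / (D : ℝ)) * (2 * d * N) := by
          gcongr
      _ = 2 / N := by
          rw [hDR]
          field_simp

theorem CmaxPrime_subset_closure_Cmax_two_outcomes (nA nB : ℕ) :
    CmaxPrime nA nB 2 ⊆ closure (Cmax nA nB 2) := by
  intro p hp
  obtain ⟨hcorr, d, hd, P, Q, hP, hQ, htr⟩ := hp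
  rw [Metric.mem_closure_iff]
  intro ε hε
  obtain ⟨N, hNgt⟩ := exists_nat_gt (2 / ε)
  have hN0 : 0 < N := by
    have h2e : (0 : ℝ) < 2 / ε := by positivity
    exact_mod_cast Nat.cast_pos.1 (lt_trans h2e hNgt)
  have h2N : 2 / (N : ℝ) < ε := by
    have hNpos : (0 : ℝ) < N := by exact_mod_cast hN0
    rw [div_lt_iff₀ hNpos]
    have := (div_lt_iff₀ hε).1 hNgt
    linarith
  obtain ⟨q, hqmem, hqest⟩ := CP.approx_step hd P Q hP hQ N hN0
  refine ⟨q, hqmem, ?_⟩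
  rw [dist_pi_lt_iff hε]
  intro x
  rw [dist_pi_lt_iff hε]
  intro y
  rw [dist_pi_lt_iff hε]
  intro i
  rw [dist_pi_lt_iff hε]
  intro j
  have hp' : p x y i j = ((1 / (d : ℂ)) * (P x i * Q y j).trace).re := by
    have h := congrArg Complex.re (htr x y i j)
    simpa using h
  rw [Real.dist_eq]
  calc |p x y i j - q x y i j| = |q x y i j - p x y i j| := abs_sub_comm _ _
    _ = |q x y i j - ((1 / (d : ℂ)) * (P x i * Q y j).trace).re| := by rw [← hp']
    _ ≤ 2 / N := hqest x y i j
    _ < ε := h2N
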